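/- Let A, B, C be three points in ℝ² with dist(A,B) = 1, dist(A,C) > 1, and dist(B,C) > 1. Then for every point x on the closed segment [A,B], dist(x,C) ≥ √3/2. -/

import Mathlib

theorem dist_segment_point_ge (A B C : EuclideanSpace ℝ (Fin 2))
    (hAB : dist A B = 1) (hAC : 1 < dist A C) (hBC : 1 < dist B C) :
    ∀ x ∈ segment ℝ A B, Real.sqrt 3 / 2 ≤ dist x C := by
  rintro x ⟨s, t, hs, ht, hst, rfl⟩
  have hx : s • A + t • B - C = s • (A - C) + t • (B - C) := by
    have h : s • (A - C) + t • (B - C) = s • A + t • B - (s + t) • C := by module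
    rw [h, hst, one_smul]
  have hnuv : ‖(A - C) - (B - C)‖ = 1 := by
    rw [show (A - C) - (B - C) = A - B by abel, ← dist_eq_norm, hAB]
  have hnu : 1 < ‖A - C‖ := by rw [← dist_eq_norm]; exact hAC
  have hnv : 1 < ‖B - C‖ := by rw [← dist_eq_norm]; exact hBC
  have ha : 1 < ‖A - C‖ ^ 2 := by nlinarith
  have hb : 1 < ‖B - C‖ ^ 2 := by nlinarith
  have hinner := norm_sub_sq_real (A - C) (B - C)
  have hone : ‖A - C‖ ^ 2 - 2 * inner ℝ (A - C) (B - C) + ‖B - C‖ ^ 2 = 1 := by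
    rw [← hinner, hnuv]; norm_num
  have h2 : ‖s • (A - C) + t • (B - C)‖ ^ 2 =
      s ^ 2 * ‖A - C‖ ^ 2 + 2 * (s * t) * inner ℝ (A - C) (B - C)
        + t ^ 2 * ‖B - C‖ ^ 2 := by
    rw [norm_add_sq_real, norm_smul, norm_smul, real_inner_smul_left,
      real_inner_smul_right, Real.norm_eq_abs, Real.norm_eq_abs,
      abs_of_nonneg hs, abs_of_nonneg ht]
    ring
  have hsq : dist (s • A + t • B) C ^ 2 ≥ 3 / 4 := by
    rw [dist_eq_norm, hx, h2]
    nlinarith [mul_nonneg hs ht, sq_nonneg (s - t),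
      mul_nonneg hs (le_of_lt (sub_pos.mpr ha)),
      mul_nonneg ht (le_of_lt (sub_pos.mpr hb))]
  have h34 : (Real.sqrt 3 / 2) ^ 2 = 3 / 4 := by
    rw [div_pow, Real.sq_sqrt (by norm_num : (3:ℝ) ≥ 0)]
    norm_num
  nlinarith [Real.sqrt_nonneg 3, dist_nonneg (x := s • A + t • B) (y := C)]
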